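/- Let K ≥ 1, let μ ∈ ℝ^K satisfy 0 < μ_1 ≤ μ_2 ≤ ⋯ ≤ μ_K < 1, and let g ∈ ℝ^K with g_i ≥ 0 for all i. Then max over all nonempty subsets A ⊆ {1,…,K} of γ̃²(A)/|A| is at least (∑_{i=1}^K μ_i(1−μ_i) g_i²) / ((1+ln K)·(3 + ln(1/μ_1) + ln(1/(1−μ_K)))), where γ̃²(A) = ∑_{i∈A} μ_i(1−μ_i)g_i² + 2∑_{i<j, i,j∈A} μ_i(1−μ_j)g_i g_j. -/

import Mathlib

private lemma exp_log_half' {a : ℝ} (ha : 0 < a) :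
    Real.exp (Real.log a / 2) = Real.sqrt a := by
  rw [Real.sqrt_eq_rpow, Real.rpow_def_of_pos ha]
  ring_nf

private lemma sqrt_mul_exp_half {m : ℝ} (h0 : 0 < m) (h1 : m < 1) :
    Real.sqrt (m*(1-m)) * Real.exp (Real.log (m/(1-m)) / 2) = m := by
  have hm1 : 0 < 1 - m := by linarith
  rw [exp_log_half' (div_pos h0 hm1), ← Real.sqrt_mul (by positivity)]
  rw [show m*(1-m)*(m/(1-m)) = m^2 by field_simp]
  exact Real.sqrt_sq h0.le

private lemma sqrt_div_exp_half {m : ℝ} (h0 : 0 < m) (h1 : m < 1) :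
    Real.sqrt (m*(1-m)) / Real.exp (Real.log (m/(1-m)) / 2) = 1 - m := by
  have hm1 : 0 < 1 - m := by linarith
  rw [exp_log_half' (div_pos h0 hm1), ← Real.sqrt_div (by positivity)]
  rw [show m*(1-m)/(m/(1-m)) = (1-m)^2 by field_simp]
  exact Real.sqrt_sq hm1.le

private lemma pair_bound' {m1 m2 g1 g2 c : ℝ} (h01 : 0 < m1) (h11 : m1 < 1)
    (h02 : 0 < m2) (h12 : m2 < 1) (hg1 : 0 ≤ g1) (hg2 : 0 ≤ g2) :
    (Real.sqrt (m1*(1-m1)) * g1 * Real.exp (-|Real.log (m1/(1-m1)) - c|/2))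
      * (Real.sqrt (m2*(1-m2)) * g2 * Real.exp (-|Real.log (m2/(1-m2)) - c|/2))
      ≤ m1 * (1-m2) * (g1*g2) := by
  set x1 := Real.log (m1/(1-m1)) with hx1
  set x2 := Real.log (m2/(1-m2)) with hx2
  have htri : x2 - x1 ≤ |x1 - c| + |x2 - c| := by
    have h := abs_sub_le x2 c x1
    have h2 := le_abs_self (x2 - x1)
    rw [abs_sub_comm c x1] at h
    linarith
  have hstep1 : (Real.sqrt (m1*(1-m1)) * g1 * Real.exp (-|x1 - c|/2))
      * (Real.sqrt (m2*(1-m2)) * g2 * Real.exp (-|x2 - c|/2))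
      = (Real.sqrt (m1*(1-m1)) * g1 * (Real.sqrt (m2*(1-m2)) * g2))
        * Real.exp (-(|x1 - c| + |x2 - c|)/2) := by
    rw [show -(|x1 - c| + |x2 - c|)/2 = -|x1 - c|/2 + -|x2 - c|/2 by ring, Real.exp_add]
    ring
  rw [hstep1]
  have hstep2 : (Real.sqrt (m1*(1-m1)) * g1 * (Real.sqrt (m2*(1-m2)) * g2))
      * Real.exp (-(|x1 - c| + |x2 - c|)/2)
      ≤ (Real.sqrt (m1*(1-m1)) * g1 * (Real.sqrt (m2*(1-m2)) * g2))
        * Real.exp ((x1 - x2)/2) := by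
    apply mul_le_mul_of_nonneg_left
    · apply Real.exp_le_exp.mpr
      linarith
    · positivity
  refine hstep2.trans (le_of_eq ?_)
  have e1 : Real.sqrt (m1*(1-m1)) * Real.exp (x1/2) = m1 := sqrt_mul_exp_half h01 h11
  have e2 : Real.sqrt (m2*(1-m2)) / Real.exp (x2/2) = 1 - m2 := sqrt_div_exp_half h02 h12
  have hsplit : Real.exp ((x1 - x2)/2) = Real.exp (x1/2) / Real.exp (x2/2) := by
    rw [show (x1 - x2)/2 = x1/2 - x2/2 by ring, Real.exp_sub]
  rw [hsplit]
  calc Real.sqrt (m1*(1-m1)) * g1 * (Real.sqrt (m2*(1-m2)) * g2)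
        * (Real.exp (x1/2) / Real.exp (x2/2))
      = (Real.sqrt (m1*(1-m1)) * Real.exp (x1/2))
        * (Real.sqrt (m2*(1-m2)) / Real.exp (x2/2)) * (g1*g2) := by ring
    _ = m1 * (1-m2) * (g1*g2) := by rw [e1, e2]

private lemma exp_neg_eighth' : (22/25 : ℝ) ≤ Real.exp (-(1/8)) := by
  have h8 : Real.exp (1/8) ^ (8:ℕ) = Real.exp 1 := by
    rw [← Real.exp_nat_mul]; norm_num
  have hle : Real.exp (1/8) ≤ 25/22 := by
    by_contra hc
    push_neg at hc
    have h2 := pow_lt_pow_left₀ hc (by norm_num : (0:ℝ) ≤ 25/22) (by norm_num : (8:ℕ) ≠ 0)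
    rw [h8] at h2
    have h3 := Real.exp_one_lt_d9
    norm_num at h2
    linarith
  rw [Real.exp_neg, le_inv_comm₀ (by norm_num) (Real.exp_pos _)]
  calc Real.exp (1/8) ≤ 25/22 := hle
    _ ≤ (22/25:ℝ)⁻¹ := by norm_num

private lemma S0_ge' : (34/3 : ℝ) ≤ 2 * ∑ j ∈ Finset.range 16, Real.exp (-(((j:ℝ)+1)/8)) := by
  have hterm : ∀ j ∈ Finset.range 16, ((22/25:ℝ))^(j+1) ≤ Real.exp (-(((j:ℝ)+1)/8)) := by
    intro j _
    have h : Real.exp (-(((j:ℝ)+1)/8)) = Real.exp (-(1/8)) ^ (j+1) := by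
      rw [← Real.exp_nat_mul]; push_cast; ring_nf
    rw [h]
    exact pow_le_pow_left₀ (by norm_num) exp_neg_eighth' _
  have hsum := Finset.sum_le_sum hterm
  have hnum : (17/3 : ℝ) ≤ ∑ j ∈ Finset.range 16, ((22/25:ℝ))^(j+1) := by
    norm_num [Finset.sum_range_succ]
  linarith

private lemma harm_le' (K : ℕ) : ∑ n ∈ Finset.Icc 1 K, (1 : ℝ)/(n:ℝ) ≤ 1 + Real.log K := by
  have h := harmonic_le_one_add_log K
  have he : (harmonic K : ℝ) = ∑ n ∈ Finset.Icc 1 K, (1 : ℝ)/(n:ℝ) := by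
    rw [harmonic_eq_sum_Icc]
    push_cast
    simp [one_div]
  linarith [he ▸ h]

private lemma sq_sum_identity' (A : Finset ℕ) (f : ℕ → ℝ) :
    (∑ i ∈ A, f i)^2 = ∑ i ∈ A, f i^2
      + 2 * ∑ i ∈ A, ∑ j ∈ A.filter (fun j => i < j), f i * f j := by
  classical
  induction A using Finset.induction_on with
  | empty => simp
  | insert _ _ ha ih =>
    rename_i a A
    rw [Finset.sum_insert ha, Finset.sum_insert ha, Finset.sum_insert ha]
    have hinner : ∀ i ∈ A, (∑ j ∈ (insert a A).filter (fun j => i < j), f i * f j)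
        = (if i < a then f i * f a else 0) + ∑ j ∈ A.filter (fun j => i < j), f i * f j := by
      intro i hi
      rw [Finset.filter_insert]
      by_cases h : i < a
      · rw [if_pos h, if_pos h, Finset.sum_insert (by simp [Finset.mem_filter, ha])]
      · rw [if_neg h, if_neg h, zero_add]
    rw [Finset.sum_congr rfl hinner, Finset.sum_add_distrib]
    have haterm : (insert a A).filter (fun j => a < j) = A.filter (fun j => a < j) := by
      rw [Finset.filter_insert, if_neg (lt_irrefl a)]
    rw [haterm]
    have hsplit : (∑ i ∈ A, if i < a then f i * f a else 0)
        + ∑ j ∈ A.filter (fun j => a < j), f a * f j = f a * ∑ i ∈ A, f i := by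
      rw [← Finset.sum_filter]
      have hpart : A.filter (fun i => ¬ i < a) = A.filter (fun i => a < i) := by
        apply Finset.filter_congr
        intro i hi
        have : i ≠ a := fun h => ha (h ▸ hi)
        simp only [not_lt, eq_iff_iff]
        omega
      have hsum := Finset.sum_filter_add_sum_filter_not A (fun i => i < a) f
      rw [hpart] at hsum
      calc (∑ i ∈ A.filter (fun i => i < a), f i * f a)
            + ∑ j ∈ A.filter (fun j => a < j), f a * f j
          = f a * ((∑ i ∈ A.filter (fun i => i < a), f i)
            + ∑ j ∈ A.filter (fun j => a < j), f j) := by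
            rw [mul_add, Finset.mul_sum, Finset.mul_sum]
            congr 1
            exact Finset.sum_congr rfl (fun i _ => mul_comm _ _)
        _ = f a * ∑ i ∈ A, f i := by rw [hsum]
    linear_combination ih + 2*hsplit.symm

private lemma exists_good_subset' (K : ℕ) (hK : 1 ≤ K) (w : ℕ → ℝ)
    (hw : ∀ i ∈ Finset.Icc 1 K, 0 ≤ w i) :
    ∃ A : Finset ℕ, A.Nonempty ∧ A ⊆ Finset.Icc 1 K ∧
      (A.card : ℝ) * ∑ i ∈ Finset.Icc 1 K, (w i)^2
        ≤ (∑ i ∈ A, w i)^2 * (1 + Real.log K) := by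
  classical
  set I := Finset.Icc 1 K with hI
  set W := ∑ i ∈ I, (w i)^2 with hW
  have hlogK : (0:ℝ) ≤ Real.log K := Real.log_natCast_nonneg K
  by_contra hcon
  push_neg at hcon
  set P := I.filter (fun i => 0 < w i) with hP
  have hWP : W = ∑ i ∈ P, (w i)^2 := by
    refine (Finset.sum_subset (Finset.filter_subset _ _) ?_).symm
    intro i hi hni
    have h0 : ¬ 0 < w i := by
      intro h; exact hni (Finset.mem_filter.mpr ⟨hi, h⟩)
    have : w i = 0 := le_antisymm (not_lt.mp h0) (hw i hi)
    simp [this]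
  set B : ℕ → Finset ℕ :=
    fun i => I.filter (fun j => w i < w j ∨ (w j = w i ∧ j ≤ i)) with hB
  have hmemB : ∀ i ∈ I, i ∈ B i := by
    intro i hi
    exact Finset.mem_filter.mpr ⟨hi, Or.inr ⟨rfl, le_refl i⟩⟩
  have hBw : ∀ i, ∀ j ∈ B i, w i ≤ w j := by
    intro i j hj
    rcases (Finset.mem_filter.mp hj).2 with h | h
    · exact h.le
    · exact h.1.ge
  set r : ℕ → ℕ := fun i => (B i).card with hr
  have hr1 : ∀ i ∈ I, 1 ≤ r i := by
    intro i hi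
    exact Finset.card_pos.mpr ⟨i, hmemB i hi⟩
  have hrK : ∀ i, r i ≤ K := by
    intro i
    calc (B i).card ≤ I.card := Finset.card_le_card (Finset.filter_subset _ _)
      _ = K := by rw [hI, Nat.card_Icc]; omega
  have haux : ∀ i ∈ I, ∀ j ∈ I, (w j < w i ∨ (w i = w j ∧ i < j)) → r i < r j := by
    intro i hi j hj hcase
    apply Finset.card_lt_card
    rw [Finset.ssubset_iff_of_subset]
    · refine ⟨j, hmemB j hj, ?_⟩
      intro hjBi
      rcases (Finset.mem_filter.mp hjBi).2 with h | h
      · rcases hcase with h' | h'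
        · exact absurd h (not_lt.mpr h'.le)
        · exact absurd h (not_lt.mpr h'.1.ge)
      · rcases hcase with h' | h'
        · exact absurd h.1 (ne_of_lt h')
        · omega
    · intro k hk
      rcases (Finset.mem_filter.mp hk).2 with h | h
      · refine Finset.mem_filter.mpr ⟨(Finset.mem_filter.mp hk).1, Or.inl ?_⟩
        rcases hcase with h' | h'
        · exact h'.trans h
        · exact h'.1 ▸ h
      · rcases hcase with h' | h'
        · exact Finset.mem_filter.mpr ⟨(Finset.mem_filter.mp hk).1,
            Or.inl (lt_of_lt_of_le h' h.1.ge)⟩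
        · exact Finset.mem_filter.mpr ⟨(Finset.mem_filter.mp hk).1,
            Or.inr ⟨h.1.trans h'.1, h.2.trans h'.2.le⟩⟩
  have hinj : Set.InjOn r P := by
    intro i hiP j hjP hij
    by_contra hne
    have hi : i ∈ I := (Finset.mem_filter.mp hiP).1
    have hj : j ∈ I := (Finset.mem_filter.mp hjP).1
    rcases lt_trichotomy (w i) (w j) with h | h | h
    · exact absurd hij (ne_of_gt (haux j hj i hi (Or.inl h)))
    · rcases lt_or_gt_of_ne (fun h' : i = j => hne h') with h' | h'
      · exact absurd hij (ne_of_lt (haux i hi j hj (Or.inr ⟨h, h'⟩)))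
      · exact absurd hij (ne_of_gt (haux j hj i hi (Or.inr ⟨h.symm, h'⟩)))
    · exact absurd hij (ne_of_lt (haux i hi j hj (Or.inl h)))
  have hpoint : ∀ i ∈ P, (w i)^2 * (1 + Real.log K) < W * (1/(r i : ℝ)) := by
    intro i hiP
    have hi : i ∈ I := (Finset.mem_filter.mp hiP).1
    have hwi : 0 < w i := (Finset.mem_filter.mp hiP).2
    have hBne : (B i).Nonempty := ⟨i, hmemB i hi⟩
    have hBsub : B i ⊆ I := Finset.filter_subset _ _
    have hcard : (0:ℝ) < (r i : ℝ) := by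
      exact_mod_cast hr1 i hi
    have hsum : (r i : ℝ) * w i ≤ ∑ j ∈ B i, w j := by
      have := Finset.card_nsmul_le_sum (B i) w (w i) (fun j hj => hBw i j hj)
      simpa [nsmul_eq_mul] using this
    have hcc := hcon (B i) hBne hBsub
    have hs2 : ((r i : ℝ) * w i)^2 ≤ (∑ j ∈ B i, w j)^2 := by
      apply sq_le_sq' _ hsum
      nlinarith [hcard, hwi.le]
    have h1K : (0:ℝ) ≤ 1 + Real.log K := by linarith
    have hkey : ((r i:ℝ) * w i)^2 * (1 + Real.log K) < (r i : ℝ) * W := by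
      calc ((r i:ℝ) * w i)^2 * (1 + Real.log K)
          ≤ (∑ j ∈ B i, w j)^2 * (1 + Real.log K) := by
            exact mul_le_mul_of_nonneg_right hs2 h1K
        _ < (r i : ℝ) * W := hcc
    rw [mul_pow] at hkey
    rw [mul_one_div, lt_div_iff₀ hcard]
    nlinarith [hkey, hcard]
  have hPne : P.Nonempty := by
    rw [Finset.nonempty_iff_ne_empty]
    intro hPe
    have hW0 : W = 0 := by rw [hWP, hPe]; simp
    have h1 : (1:ℕ) ∈ I := by rw [hI]; simp [hK]
    have h2 := hcon {1} ⟨1, Finset.mem_singleton_self 1⟩ (Finset.singleton_subset_iff.mpr h1)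
    rw [hW0] at h2
    simp at h2
    nlinarith [sq_nonneg (w 1), hlogK, h2]
  have hsumlt : ∑ i ∈ P, (w i)^2 * (1 + Real.log K) < ∑ i ∈ P, W * (1/(r i:ℝ)) :=
    Finset.sum_lt_sum_of_nonempty hPne hpoint
  have hWnonneg : 0 ≤ W := by
    rw [hW]; exact Finset.sum_nonneg (fun i _ => sq_nonneg _)
  have hharm : ∑ i ∈ P, (1/(r i:ℝ)) ≤ 1 + Real.log K := by
    calc ∑ i ∈ P, (1/(r i:ℝ)) = ∑ n ∈ P.image r, (1/(n:ℝ)) := by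
          rw [Finset.sum_image (fun i hi j hj h => hinj hi hj h)]
      _ ≤ ∑ n ∈ Finset.Icc 1 K, (1/(n:ℝ)) := by
          apply Finset.sum_le_sum_of_subset_of_nonneg
          · intro n hn
            rcases Finset.mem_image.mp hn with ⟨i, hiP, rfl⟩
            exact Finset.mem_Icc.mpr ⟨hr1 i (Finset.mem_filter.mp hiP).1, hrK i⟩
          · intro n _ _
            positivity
      _ ≤ 1 + Real.log K := harm_le' K
  have hfinal : W * (1 + Real.log K) < W * (1 + Real.log K) := by
    calc W * (1 + Real.log K) = ∑ i ∈ P, (w i)^2 * (1 + Real.log K) := by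
          rw [hWP, Finset.sum_mul]
      _ < ∑ i ∈ P, W * (1/(r i:ℝ)) := hsumlt
      _ = W * ∑ i ∈ P, (1/(r i:ℝ)) := by rw [Finset.mul_sum]
      _ ≤ W * (1 + Real.log K) := by
          exact mul_le_mul_of_nonneg_left hharm hWnonneg
  exact lt_irrefl _ hfinal

/-- For `μ ∈ ℝ^K` with `0 < μ₁ ≤ ⋯ ≤ μ_K < 1` and `g ≥ 0`, there exists a nonempty subset
`A ⊆ {1,…,K}` such that `γ̃²(A)/|A| ≥ γ₂² / ((1+ln K)(3 + ln(1/μ₁) + ln(1/(1−μ_K))))`,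
where `γ̃²(A) = ∑_{i∈A} μᵢ(1−μᵢ)gᵢ² + 2∑_{i<j ∈ A} μᵢ(1−μⱼ)gᵢgⱼ` and
`γ₂² = ∑_{i=1}^K μᵢ(1−μᵢ)gᵢ²`. -/
theorem max_modified_gini_subset_ge_l2_gini (K : ℕ) (hK : 1 ≤ K) (μ g : ℕ → ℝ)
    (hμ1 : 0 < μ 1)
    (hmono : ∀ i, 1 ≤ i → i < K → μ i ≤ μ (i + 1))
    (hμK : μ K < 1)
    (hg : ∀ i, 0 ≤ g i) :
    ∃ A : Finset ℕ, A.Nonempty ∧ A ⊆ Finset.Icc 1 K ∧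
      ((∑ i ∈ A, μ i * (1 - μ i) * (g i) ^ 2)
          + 2 * ∑ i ∈ A, ∑ j ∈ A.filter (fun j => i < j), μ i * (1 - μ j) * (g i * g j))
        / (A.card : ℝ)
      ≥ (∑ i ∈ Finset.Icc 1 K, μ i * (1 - μ i) * (g i) ^ 2)
          / ((1 + Real.log K) * (3 + Real.log (1 / μ 1) + Real.log (1 / (1 - μ K)))) := by
  classical
  set I := Finset.Icc 1 K with hI
  -- monotonicity of μ on [1, K]
  have hmono' : ∀ i j : ℕ, 1 ≤ i → i ≤ j → j ≤ K → μ i ≤ μ j := by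
    intro i j h1 hij hjK
    induction j, hij using Nat.le_induction with
    | base => exact le_rfl
    | succ n hn ih =>
      have hnK : n ≤ K := by omega
      have h1n : 1 ≤ n := le_trans h1 hn
      exact le_trans (ih hnK) (hmono n h1n (by omega))
  have hmem : ∀ i ∈ I, 1 ≤ i ∧ i ≤ K := by
    intro i hi; exact Finset.mem_Icc.mp hi
  have hpos : ∀ i ∈ I, 0 < μ i := by
    intro i hi
    obtain ⟨h1, h2⟩ := hmem i hi
    exact lt_of_lt_of_le hμ1 (hmono' 1 i le_rfl h1 h2)
  have hlt1 : ∀ i ∈ I, μ i < 1 := by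
    intro i hi
    obtain ⟨h1, h2⟩ := hmem i hi
    exact lt_of_le_of_lt (hmono' i K h1 h2 le_rfl) hμK
  have h1I : (1:ℕ) ∈ I := Finset.mem_Icc.mpr ⟨le_rfl, hK⟩
  have hKI : K ∈ I := Finset.mem_Icc.mpr ⟨hK, le_rfl⟩
  have hμ1lt1 : μ 1 < 1 := hlt1 1 h1I
  have hμKpos : 0 < μ K := hpos K hKI
  -- logit coordinates
  set xs : ℕ → ℝ := fun i => Real.log (μ i / (1 - μ i)) with hxs
  have hxmono : ∀ i ∈ I, ∀ j ∈ I, i ≤ j → xs i ≤ xs j := by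
    intro i hi j hj hij
    have h0i := hpos i hi; have h1i := hlt1 i hi
    have h0j := hpos j hj; have h1j := hlt1 j hj
    have hμij : μ i ≤ μ j := hmono' i j (hmem i hi).1 hij (hmem j hj).2
    apply Real.log_le_log (div_pos h0i (by linarith))
    rw [div_le_div_iff₀ (by linarith) (by linarith)]
    nlinarith
  -- constants
  set L1 := Real.log (1 / μ 1) with hL1
  set L2 := Real.log (1 / (1 - μ K)) with hL2
  have hL1n : 0 ≤ L1 := Real.log_nonneg (by rw [le_div_iff₀ hμ1]; linarith)
  have hL2n : 0 ≤ L2 := Real.log_nonneg (by rw [le_div_iff₀ (by linarith)]; linarith)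
  set R := xs K - xs 1 with hR
  have hR0 : 0 ≤ R := by
    have := hxmono 1 h1I K hKI hK
    rw [hR]; linarith
  have hRL : R ≤ L1 + L2 := by
    have hxK : xs K ≤ L2 := by
      simp only [hxs, hL2]
      have h1 : μ K / (1 - μ K) ≤ 1 / (1 - μ K) :=
        (div_le_div_iff_of_pos_right (by linarith)).mpr hμK.le
      exact Real.log_le_log (div_pos hμKpos (by linarith)) h1
    have hx1 : -(xs 1) ≤ L1 := by
      have hlog1 : L1 = - Real.log (μ 1) := by rw [hL1, one_div, Real.log_inv]
      have : Real.log (μ 1) ≤ xs 1 := by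
        simp only [hxs]
        apply Real.log_le_log hμ1
        rw [le_div_iff₀ (by linarith)]
        nlinarith
      linarith
    rw [hR]; linarith
  -- the grid
  set T := Nat.ceil (8*R) with hT
  set N := T + 33 with hN
  set cgr : ℕ → ℝ := fun t => xs 1 + ((t:ℝ) - 16)/8 with hcgr
  have hTR : (T:ℝ) < 8*R + 1 := Nat.ceil_lt_add_one (by positivity)
  have h8RT : 8*R ≤ (T:ℝ) := Nat.le_ceil _
  set S0 := 2 * ∑ j ∈ Finset.range 16, Real.exp (-(((j:ℝ)+1)/8)) with hS0
  have hS0pos : (0:ℝ) < S0 := by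
    have := S0_ge'
    rw [hS0]; linarith
  have hgrid : ∀ i ∈ I, S0 ≤ ∑ t ∈ Finset.range N, Real.exp (-|xs i - cgr t|) := by
    intro i hi
    have hu0 : 0 ≤ xs i - xs 1 := by
      have := hxmono 1 h1I i hi (hmem i hi).1; linarith
    have huR : xs i - xs 1 ≤ R := by
      have := hxmono i hi K hKI (hmem i hi).2; rw [hR]; linarith
    set u := xs i - xs 1 with hu
    set q := Nat.floor (8*u) with hq
    have hq8u : (q:ℝ) ≤ 8*u := Nat.floor_le (by linarith)
    have h8uq : 8*u < (q:ℝ) + 1 := Nat.lt_floor_add_one _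
    have hqT : q ≤ T := by
      have h2 : (q:ℝ) ≤ (T:ℝ) := le_trans hq8u (le_trans (by linarith) h8RT)
      exact_mod_cast h2
    have hcv : ∀ t : ℕ, cgr t = xs 1 + ((t:ℝ) - 16)/8 := fun t => rfl
    -- lower bounds on the two halves
    have hleft : ∀ j ∈ Finset.range 16,
        Real.exp (-((16-(j:ℝ))/8)) ≤ Real.exp (-|xs i - cgr (q+1+j)|) := by
      intro j hj
      have hj15 : (j:ℝ) ≤ 15 := by
        have := Finset.mem_range.mp hj; exact_mod_cast Nat.lt_succ_iff.mp (by omega)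
      apply Real.exp_le_exp.mpr
      apply neg_le_neg
      rw [hcv]
      have hcast : ((q+1+j : ℕ):ℝ) = (q:ℝ) + 1 + (j:ℝ) := by push_cast; ring
      rw [hcast]
      rw [abs_le]
      constructor
      · linarith
      · linarith
    have hright : ∀ j ∈ Finset.range 16,
        Real.exp (-(((j:ℝ)+1)/8)) ≤ Real.exp (-|xs i - cgr (q+1+(16+j))|) := by
      intro j hj
      apply Real.exp_le_exp.mpr
      apply neg_le_neg
      rw [hcv]
      have hcast : ((q+1+(16+j) : ℕ):ℝ) = (q:ℝ) + 17 + (j:ℝ) := by push_cast; ring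
      rw [hcast]
      have hj0 : (0:ℝ) ≤ (j:ℝ) := by positivity
      rw [abs_le]
      constructor
      · linarith
      · linarith
    -- reflect for the left half
    have hrefl : ∑ j ∈ Finset.range 16, Real.exp (-((16-(j:ℝ))/8))
        = ∑ j ∈ Finset.range 16, Real.exp (-(((j:ℝ)+1)/8)) := by
      rw [← Finset.sum_range_reflect (fun j => Real.exp (-(((j:ℝ)+1)/8))) 16]
      apply Finset.sum_congr rfl
      intro j hj
      have hj15 : j ≤ 15 := by
        have := Finset.mem_range.mp hj; omega
      congr 1
      have hc : ((16 - 1 - j : ℕ) : ℝ) = 15 - (j:ℝ) := by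
        have h1 : (16 - 1 - j : ℕ) = 15 - j := by omega
        rw [h1, Nat.cast_sub hj15]
        norm_num
      rw [hc]
      ring
    -- assemble
    have hsplit : ∑ j ∈ Finset.range 32, Real.exp (-|xs i - cgr (q+1+j)|)
        = ∑ j ∈ Finset.range 16, Real.exp (-|xs i - cgr (q+1+j)|)
          + ∑ j ∈ Finset.range 16, Real.exp (-|xs i - cgr (q+1+(16+j))|) := by
      have h1 : ∑ j ∈ Finset.Ico 16 32, Real.exp (-|xs i - cgr (q+1+j)|)
          = ∑ j ∈ Finset.range (32-16), Real.exp (-|xs i - cgr (q+1+(16+j))|) :=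
        Finset.sum_Ico_eq_sum_range (fun j => Real.exp (-|xs i - cgr (q+1+j)|)) 16 32
      rw [Finset.range_eq_Ico,
        ← Finset.sum_Ico_consecutive _ (by norm_num : (0:ℕ) ≤ 16) (by norm_num : (16:ℕ) ≤ 32),
        ← Finset.range_eq_Ico, h1]
    have hinj32 : ∀ a ∈ Finset.range 32, ∀ b ∈ Finset.range 32, q+1+a = q+1+b → a = b := by
      intro a _ b _ h; omega
    have hsub : ((Finset.range 32).image (fun j => q+1+j)) ⊆ Finset.range N := by
      intro t ht
      rcases Finset.mem_image.mp ht with ⟨j, hj, rfl⟩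
      have := Finset.mem_range.mp hj
      rw [hN]; exact Finset.mem_range.mpr (by omega)
    have himg : ∑ t ∈ (Finset.range 32).image (fun j => q+1+j), Real.exp (-|xs i - cgr t|)
        = ∑ j ∈ Finset.range 32, Real.exp (-|xs i - cgr (q+1+j)|) :=
      Finset.sum_image hinj32
    have hstep : ∑ j ∈ Finset.range 32, Real.exp (-|xs i - cgr (q+1+j)|)
        ≤ ∑ t ∈ Finset.range N, Real.exp (-|xs i - cgr t|) := by
      rw [← himg]
      exact Finset.sum_le_sum_of_subset_of_nonneg hsub (fun _ _ _ => (Real.exp_pos _).le)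
    calc S0 = ∑ j ∈ Finset.range 16, Real.exp (-((16-(j:ℝ))/8))
          + ∑ j ∈ Finset.range 16, Real.exp (-(((j:ℝ)+1)/8)) := by
          rw [hS0, hrefl]; ring
      _ ≤ ∑ j ∈ Finset.range 16, Real.exp (-|xs i - cgr (q+1+j)|)
          + ∑ j ∈ Finset.range 16, Real.exp (-|xs i - cgr (q+1+(16+j))|) :=
          add_le_add (Finset.sum_le_sum hleft) (Finset.sum_le_sum hright)
      _ = ∑ j ∈ Finset.range 32, Real.exp (-|xs i - cgr (q+1+j)|) := hsplit.symm
      _ ≤ ∑ t ∈ Finset.range N, Real.exp (-|xs i - cgr t|) := hstep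
  -- total mass and choice of a grid point
  set W := ∑ i ∈ I, μ i * (1 - μ i) * (g i)^2 with hW
  have ha_nn : ∀ i ∈ I, 0 ≤ μ i * (1 - μ i) * (g i)^2 := by
    intro i hi
    have := hpos i hi; have := hlt1 i hi
    have h1 : 0 ≤ μ i * (1 - μ i) := by nlinarith
    exact mul_nonneg h1 (sq_nonneg _)
  have hWn : 0 ≤ W := Finset.sum_nonneg ha_nn
  set F : ℕ → ℝ := fun t => ∑ i ∈ I, μ i * (1 - μ i) * (g i)^2 * Real.exp (-|xs i - cgr t|)
    with hF
  have hsumF : S0 * W ≤ ∑ t ∈ Finset.range N, F t := by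
    have hswap : ∑ t ∈ Finset.range N, F t
        = ∑ i ∈ I, μ i * (1 - μ i) * (g i)^2 * (∑ t ∈ Finset.range N, Real.exp (-|xs i - cgr t|)) := by
      rw [hF, Finset.sum_comm]
      exact Finset.sum_congr rfl (fun i _ => by rw [Finset.mul_sum])
    rw [hswap, hW, Finset.mul_sum]
    apply Finset.sum_le_sum
    intro i hi
    rw [mul_comm S0 _]
    exact mul_le_mul_of_nonneg_left (hgrid i hi) (ha_nn i hi)
  have hNpos : 0 < N := by rw [hN]; omega
  have hNRpos : (0:ℝ) < (N:ℝ) := by exact_mod_cast hNpos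
  obtain ⟨t0, ht0mem, ht0⟩ : ∃ t ∈ Finset.range N, S0 * W / (N:ℝ) ≤ F t := by
    apply Finset.exists_le_of_sum_le ⟨0, Finset.mem_range.mpr hNpos⟩
    rw [Finset.sum_const, Finset.card_range, nsmul_eq_mul]
    calc (N:ℝ) * (S0 * W / (N:ℝ)) = S0 * W := by field_simp
      _ ≤ ∑ t ∈ Finset.range N, F t := hsumF
  -- the weight function
  set w : ℕ → ℝ := fun i => Real.sqrt (μ i * (1 - μ i)) * g i * Real.exp (-|xs i - cgr t0|/2)
    with hw
  have hwnn : ∀ i ∈ Finset.Icc 1 K, 0 ≤ w i := by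
    intro i _
    rw [hw]
    exact mul_nonneg (mul_nonneg (Real.sqrt_nonneg _) (hg i)) (Real.exp_pos _).le
  have hwsq : ∀ i ∈ I, (w i)^2 = μ i * (1-μ i) * (g i)^2 * Real.exp (-|xs i - cgr t0|) := by
    intro i hi
    have hvm : 0 ≤ μ i * (1 - μ i) := by
      have := hpos i hi; have := hlt1 i hi; nlinarith
    have h1 : Real.sqrt (μ i*(1-μ i))^2 = μ i*(1-μ i) := Real.sq_sqrt hvm
    have h2 : (Real.exp (-|xs i - cgr t0|/2))^2 = Real.exp (-|xs i - cgr t0|) := by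
      rw [sq, ← Real.exp_add]
      congr 1
      ring
    calc (w i)^2 = Real.sqrt (μ i*(1-μ i))^2 * (g i)^2 * (Real.exp (-|xs i - cgr t0|/2))^2 := by
          rw [hw]; ring
      _ = μ i * (1-μ i) * (g i)^2 * Real.exp (-|xs i - cgr t0|) := by rw [h1, h2]
  obtain ⟨A, hAne, hAsub, hA⟩ := exists_good_subset' K hK w hwnn
  refine ⟨A, hAne, hAsub, ?_⟩
  have hFt0 : ∑ i ∈ Finset.Icc 1 K, (w i)^2 = F t0 := by
    rw [hF]
    exact Finset.sum_congr rfl (fun i hi => hwsq i hi)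
  -- step B : the quadratic form dominates the square of the weighted sum
  have hstepB : (∑ i ∈ A, w i)^2 ≤ (∑ i ∈ A, μ i * (1 - μ i) * (g i)^2)
      + 2 * ∑ i ∈ A, ∑ j ∈ A.filter (fun j => i < j), μ i * (1 - μ j) * (g i * g j) := by
    rw [sq_sum_identity' A w]
    apply add_le_add
    · apply Finset.sum_le_sum
      intro i hiA
      have hi := hAsub hiA
      rw [hwsq i hi]
      calc μ i * (1-μ i) * (g i)^2 * Real.exp (-|xs i - cgr t0|)
          ≤ μ i * (1-μ i) * (g i)^2 * 1 := by
            apply mul_le_mul_of_nonneg_left _ (ha_nn i hi)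
            calc Real.exp (-|xs i - cgr t0|) ≤ Real.exp 0 :=
                  Real.exp_le_exp.mpr (neg_nonpos.mpr (abs_nonneg _))
              _ = 1 := Real.exp_zero
        _ = μ i * (1-μ i) * (g i)^2 := by ring
    · apply mul_le_mul_of_nonneg_left _ (by norm_num : (0:ℝ) ≤ 2)
      apply Finset.sum_le_sum
      intro i hiA
      apply Finset.sum_le_sum
      intro j hjA'
      have hjA := (Finset.mem_filter.mp hjA').1
      have hi := hAsub hiA
      have hj := hAsub hjA
      have := pair_bound' (c := cgr t0) (hpos i hi) (hlt1 i hi) (hpos j hj) (hlt1 j hj)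
        (hg i) (hg j)
      simpa [hw, hxs] using this
  -- final arithmetic
  have hlogKn : (0:ℝ) ≤ Real.log K := Real.log_natCast_nonneg K
  have hΛpos : (0:ℝ) < 1 + Real.log K := by linarith
  have hD2 : (0:ℝ) < 3 + L1 + L2 := by linarith
  have hcard : (0:ℝ) < (A.card:ℝ) := by
    have := Finset.card_pos.mpr hAne
    exact_mod_cast this
  set Γ := (∑ i ∈ A, μ i * (1 - μ i) * (g i)^2)
      + 2 * ∑ i ∈ A, ∑ j ∈ A.filter (fun j => i < j), μ i * (1 - μ j) * (g i * g j) with hΓ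
  have hΓnn : 0 ≤ Γ := le_trans (sq_nonneg _) hstepB
  rw [ge_iff_le, div_le_div_iff₀ (by positivity) hcard]
  -- W * card ≤ Γ * ((1+log K) * (3+L1+L2))
  have f1 : S0 * W ≤ F t0 * (N:ℝ) := (div_le_iff₀ hNRpos).mp ht0
  have f2 : (A.card : ℝ) * F t0 ≤ (∑ i ∈ A, w i)^2 * (1 + Real.log K) := by
    rw [← hFt0]; exact hA
  have hFnn : 0 ≤ F t0 := by
    rw [← hFt0]; exact Finset.sum_nonneg (fun i _ => sq_nonneg _)
  have f4 : (N:ℝ) ≤ 8*(L1+L2) + 34 := by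
    have : (N:ℝ) = (T:ℝ) + 33 := by rw [hN]; push_cast; ring
    rw [this]; linarith
  have f5 : (34/3:ℝ) ≤ S0 := by rw [hS0]; exact S0_ge'
  have hNS : (N:ℝ) ≤ S0 * (3 + L1 + L2) := by
    linarith [mul_le_mul_of_nonneg_right f5 hD2.le, f4, hL1n, hL2n]
  have chain : S0 * (W * (A.card:ℝ)) ≤ S0 * (Γ * ((1 + Real.log K) * (3 + L1 + L2))) := by
    calc S0 * (W * (A.card:ℝ)) = (A.card:ℝ) * (S0 * W) := by ring
      _ ≤ (A.card:ℝ) * (F t0 * (N:ℝ)) := mul_le_mul_of_nonneg_left f1 hcard.le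
      _ = (N:ℝ) * ((A.card:ℝ) * F t0) := by ring
      _ ≤ (N:ℝ) * ((∑ i ∈ A, w i)^2 * (1 + Real.log K)) :=
          mul_le_mul_of_nonneg_left f2 hNRpos.le
      _ ≤ (N:ℝ) * (Γ * (1 + Real.log K)) := by
          apply mul_le_mul_of_nonneg_left _ hNRpos.le
          exact mul_le_mul_of_nonneg_right hstepB hΛpos.le
      _ ≤ (S0 * (3 + L1 + L2)) * (Γ * (1 + Real.log K)) := by
          apply mul_le_mul_of_nonneg_right hNS
          exact mul_nonneg hΓnn hΛpos.le
      _ = S0 * (Γ * ((1 + Real.log K) * (3 + L1 + L2))) := by ring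
  exact le_of_mul_le_mul_left chain hS0pos
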